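/- arXiv:1602.06915 — 8 statements merged into one kernel-verified Lean document; each statement's English description precedes it below -/
import Mathlib

section
/- For nonempty words x, y over Σ, if the sets x·{x,y}* and y·{x,y}* have a common element, then xy = yx. -/
/-- k-fold concatenation (power) of a word. -/
def wpow {σ : Type*} (z : List σ) (k : ℕ) : List σ := (List.replicate k z).flatten

/-- A nonempty word is primitive if it is not a proper power. -/
def WPrimitive {σ : Type*} (w : List σ) : Prop :=
  w ≠ [] ∧ ∀ (v : List σ) (e : ℕ), 2 ≤ e → w ≠ wpow v e

theorem fin_pos_of_mul {p m : ℕ} (i : Fin (p * m)) : 0 < m :=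
  Nat.pos_of_ne_zero fun h => absurd i.isLt (by simp [h])

/-- `arrRep A p q` is `A^{p×q}`: the array `A` repeated in `p` rows and `q` columns. -/
def arrRep {σ : Type*} {m n : ℕ} (A : Fin m × Fin n → σ) (p q : ℕ) :
    Fin (p * m) × Fin (q * n) → σ :=
  fun x => A (⟨x.1.val % m, Nat.mod_lt _ (fin_pos_of_mul x.1)⟩,
              ⟨x.2.val % n, Nat.mod_lt _ (fin_pos_of_mul x.2)⟩)

/-- Equality of arrays of possibly (syntactically) different dimensions. -/
def arrEq {σ : Type*} {m n m' n' : ℕ} (A : Fin m × Fin n → σ)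
    (B : Fin m' × Fin n' → σ) : Prop :=
  m = m' ∧ n = n' ∧ ∀ (i j : ℕ) (h1 : i < m) (h2 : j < n) (h1' : i < m') (h2' : j < n'),
    A (⟨i, h1⟩, ⟨j, h2⟩) = B (⟨i, h1'⟩, ⟨j, h2'⟩)

/-- An array is primitive if it is not a nontrivial `p×q` repetition of another array. -/
def ArrPrimitive {σ : Type*} {m n : ℕ} (M : Fin m × Fin n → σ) : Prop :=
  ∀ (m' n' p q : ℕ) (A : Fin m' × Fin n' → σ), 0 < p → 0 < q →
    arrEq M (arrRep A p q) → p = 1 ∧ q = 1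

/-- Horizontal concatenation of arrays with equal numbers of rows. -/
def hcat {σ : Type*} {m1 m2 n1 n2 : ℕ} (h : m1 = m2)
    (A : Fin m1 × Fin n1 → σ) (B : Fin m2 × Fin n2 → σ) :
    Fin m1 × Fin (n1 + n2) → σ :=
  fun x => if hn : x.2.val < n1 then A (x.1, ⟨x.2.val, hn⟩)
           else B (⟨x.1.val, h ▸ x.1.isLt⟩, ⟨x.2.val - n1, by have := x.2.isLt; omega⟩)

/-- Vertical concatenation of arrays with equal numbers of columns. -/
def vcat {σ : Type*} {m1 m2 n1 n2 : ℕ} (h : n1 = n2)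
    (A : Fin m1 × Fin n1 → σ) (B : Fin m2 × Fin n2 → σ) :
    Fin (m1 + m2) × Fin n1 → σ :=
  fun x => if hm : x.1.val < m1 then A (⟨x.1.val, hm⟩, x.2)
           else B (⟨x.1.val - m1, by have := x.1.isLt; omega⟩, ⟨x.2.val, h ▸ x.2.isLt⟩)

/-- The word over the alphabet of columns corresponding to an array. -/
def colWord {σ : Type*} {m n : ℕ} (A : Fin m × Fin n → σ) : List (Fin m → σ) :=
  List.ofFn fun j => fun i => A (i, j)

/-- Row `i` of an array, as a word. -/
def rowWord {σ : Type*} {m n : ℕ} (A : Fin m × Fin n → σ) (i : Fin m) : List σ :=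
  List.ofFn fun j => A (i, j)

/-- Column `j` of an array, as a word. -/
def colAt {σ : Type*} {m n : ℕ} (A : Fin m × Fin n → σ) (j : Fin n) : List σ :=
  List.ofFn fun i => A (i, j)

/-- Row-major reading of an array. -/
def rowMajor {σ : Type*} {m n : ℕ} (A : Fin m × Fin n → σ) : List σ :=
  (List.ofFn fun i => rowWord A i).flatten

/-- `{x,y}*`: words that are concatenations of copies of `x` and `y`. -/
def InStar {σ : Type*} (x y w : List σ) : Prop :=
  ∃ L : List (List σ), (∀ u ∈ L, u = x ∨ u = y) ∧ w = L.flatten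


private lemma instar_symm {σ : Type*} {x y w : List σ} (h : InStar x y w) : InStar y x w := by
  obtain ⟨L, hL, hw⟩ := h
  exact ⟨L, fun u hu => (hL u hu).symm, hw⟩

private lemma instar_sub {σ : Type*} {x t : List σ} (L : List (List σ))
    (hL : ∀ u ∈ L, u = x ∨ u = x ++ t) : InStar x t L.flatten := by
  induction L with
  | nil => exact ⟨[], by simp, by simp⟩
  | cons u L ih =>
    obtain ⟨L', hL', hf⟩ := ih (fun u hu => hL u (List.mem_cons_of_mem _ hu))
    rcases hL u (List.mem_cons_self ..) with h | h
    · refine ⟨u :: L', ?_, by simp [← hf]⟩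
      intro v hv
      rcases List.mem_cons.mp hv with rfl | hv
      exacts [Or.inl h, hL' v hv]
    · refine ⟨x :: t :: L', ?_, ?_⟩
      · intro v hv
        simp only [List.mem_cons] at hv
        rcases hv with rfl | rfl | hv
        exacts [Or.inl rfl, Or.inr rfl, hL' v hv]
      · rw [List.flatten_cons, List.flatten_cons, List.flatten_cons, ← hf, h,
          List.append_assoc]

private lemma key_aux {σ : Type*} {n : ℕ}
    (ih : ∀ (z x y : List σ), z.length ≤ n → x ≠ [] → y ≠ [] →
      (∃ w, InStar x y w ∧ z = x ++ w) → (∃ w, InStar x y w ∧ z = y ++ w) → x ++ y = y ++ x)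
    (x y w1 w2 : List σ) (hx : x ≠ []) (hy : y ≠ []) (hle : x.length ≤ y.length)
    (hw1 : InStar x y w1) (hw2 : InStar x y w2) (heq : x ++ w1 = y ++ w2)
    (hz : (x ++ w1).length ≤ n + 1) : x ++ y = y ++ x := by
  rw [List.append_eq_append_iff] at heq
  rcases heq with ⟨t, hy2, hsplit⟩ | ⟨c, hx2, _⟩
  · subst hy2
    by_cases ht : t = []
    · subst ht; simp
    · have hx2 : InStar x t w2 := by
        obtain ⟨L, hL, hwf⟩ := hw2
        rw [hwf]
        exact instar_sub L hL
      have hfirst : ∃ w, InStar x t w ∧ w1 = x ++ w := by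
        obtain ⟨L, hL, hwf⟩ := hw1
        match L with
        | [] =>
          exfalso
          rw [hwf] at hsplit
          simp at hsplit
          exact ht hsplit.1
        | b :: L' =>
          have hrest : InStar x t L'.flatten :=
            instar_sub L' (fun u hu => hL u (List.mem_cons_of_mem _ hu))
          rcases hL b (List.mem_cons_self ..) with rfl | rfl
          · exact ⟨L'.flatten, hrest, by rw [hwf]; simp⟩
          · obtain ⟨L₂, hL₂, hf₂⟩ := hrest
            refine ⟨t ++ L'.flatten, ⟨t :: L₂, ?_, by simp [← hf₂]⟩, ?_⟩
            · intro u hu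
              rcases List.mem_cons.mp hu with rfl | hu
              exacts [Or.inr rfl, hL₂ u hu]
            · rw [hwf, List.flatten_cons, List.append_assoc]
      have hcomm : x ++ t = t ++ x := by
        refine ih w1 x t ?_ hx ht hfirst ⟨w2, hx2, hsplit⟩
        simp only [List.length_append] at hz
        have hx1 : 0 < x.length := List.length_pos_iff.mpr hx
        omega
      rw [List.append_assoc, ← hcomm]
  · have hc : c = [] := by
      have h1 := congrArg List.length hx2
      simp only [List.length_append] at h1
      have : c.length = 0 := by omega
      simpa using List.length_eq_zero_iff.mp this
    subst hc
    simp at hx2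
    rw [hx2]

private lemma key_lemma {σ : Type*} : ∀ (n : ℕ) (z x y : List σ), z.length ≤ n → x ≠ [] → y ≠ [] →
    (∃ w, InStar x y w ∧ z = x ++ w) → (∃ w, InStar x y w ∧ z = y ++ w) →
    x ++ y = y ++ x := by
  intro n
  induction n with
  | zero =>
    rintro z x y hz hx hy ⟨w1, _, rfl⟩ _
    simp at hz
    exact absurd hz.1 hx
  | succ n ih =>
    rintro z x y hz hx hy ⟨w1, hw1, rfl⟩ ⟨w2, hw2, heq⟩
    rcases le_total x.length y.length with hle | hle
    · exact key_aux ih x y w1 w2 hx hy hle hw1 hw2 heq hz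
    · exact (key_aux ih y x w2 w1 hy hx hle (instar_symm hw2) (instar_symm hw1) heq.symm
        (heq ▸ hz)).symm

theorem stmt3 {σ : Type*} (x y : List σ) (hx : x ≠ []) (hy : y ≠ [])
    (h : ∃ z : List σ, (∃ w, InStar x y w ∧ z = x ++ w) ∧ (∃ w, InStar x y w ∧ z = y ++ w)) :
    x ++ y = y ++ x := by
  obtain ⟨z, h1, h2⟩ := h
  exact key_lemma z.length z x y le_rfl hx hy h1 h2
end

section
/- Let A be an m₁×n₁ array and B an m₂×n₂ array over an alphabet Σ (with m₁,n₁,m₂,n₂ positive). If there exist positive integers p₁,q₁,p₂,q₂ such that A^{p₁×q₁} = B^{p₂×q₂}, then there exist a nonempty array C and positive integers r₁,s₁,r₂,s₂ such that A = C^{r₁×s₁} and B = C^{r₂×s₂}. -/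
theorem per_mul {σ : Type*} (f : ℕ → σ) (a : ℕ) (h : ∀ i, f (i + a) = f i) :
    ∀ k i, f (i + k * a) = f i := by
  intro k
  induction k with
  | zero => simp
  | succ k ih =>
    intro i
    have : i + (k + 1) * a = (i + k * a) + a := by ring
    rw [this, h, ih]

theorem per_gcd {σ : Type*} (f : ℕ → σ) :
    ∀ a b, (∀ i, f (i + a) = f i) → (∀ i, f (i + b) = f i) →
      ∀ i, f (i + Nat.gcd a b) = f i := by
  intro a
  induction a using Nat.strong_induction_on with
  | _ a ih =>
    intro b ha hb i
    rcases Nat.eq_zero_or_pos a with h0 | h0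
    · subst h0; simpa using hb i
    · rw [Nat.gcd_rec a b]
      have hmod : ∀ i, f (i + b % a) = f i := by
        intro i
        have : f (i + b % a + b / a * a) = f (i + b % a) := per_mul f a ha _ _
        rw [← this, Nat.add_assoc, Nat.mod_add_div', hb]
      exact ih (b % a) (Nat.mod_lt _ h0) a hmod ha i

theorem per_mod {σ : Type*} (f : ℕ → σ) (d : ℕ) (h : ∀ i, f (i + d) = f i) (i : ℕ) :
    f i = f (i % d) := by
  conv_lhs => rw [← Nat.mod_add_div i d, Nat.mul_comm]
  exact per_mul f d h _ _

theorem stmt6 {σ : Type*} {m1 n1 m2 n2 : ℕ}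
    (hm1 : 0 < m1) (hn1 : 0 < n1) (hm2 : 0 < m2) (hn2 : 0 < n2)
    (A : Fin m1 × Fin n1 → σ) (B : Fin m2 × Fin n2 → σ)
    (h : ∃ p1 q1 p2 q2 : ℕ, 0 < p1 ∧ 0 < q1 ∧ 0 < p2 ∧ 0 < q2 ∧
      arrEq (arrRep A p1 q1) (arrRep B p2 q2)) :
    ∃ (mc nc : ℕ) (C : Fin mc × Fin nc → σ) (r1 s1 r2 s2 : ℕ),
      0 < mc ∧ 0 < nc ∧ 0 < r1 ∧ 0 < s1 ∧ 0 < r2 ∧ 0 < s2 ∧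
      arrEq A (arrRep C r1 s1) ∧ arrEq B (arrRep C r2 s2) := by
  obtain ⟨p1, q1, p2, q2, hp1, hq1, hp2, hq2, hP, hQ, heq⟩ := h
  set g : ℕ → ℕ → σ := fun i j => A (⟨i % m1, Nat.mod_lt _ hm1⟩, ⟨j % n1, Nat.mod_lt _ hn1⟩)
    with hg
  have hPpos : 0 < p1 * m1 := Nat.mul_pos hp1 hm1
  have hQpos : 0 < q1 * n1 := Nat.mul_pos hq1 hn1
  have hm1P : m1 ∣ p1 * m1 := Dvd.intro p1 (Nat.mul_comm _ _)
  have hn1Q : n1 ∣ q1 * n1 := Dvd.intro q1 (Nat.mul_comm _ _)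
  have hm2P : m2 ∣ p1 * m1 := hP ▸ Dvd.intro p2 (Nat.mul_comm _ _)
  have hn2Q : n2 ∣ q1 * n1 := hQ ▸ Dvd.intro q2 (Nat.mul_comm _ _)
  have hgB : ∀ i j, g i j = B (⟨i % m2, Nat.mod_lt _ hm2⟩, ⟨j % n2, Nat.mod_lt _ hn2⟩) := by
    intro i j
    have h1 : i % (p1 * m1) < p1 * m1 := Nat.mod_lt _ hPpos
    have h2 : j % (q1 * n1) < q1 * n1 := Nat.mod_lt _ hQpos
    have h1' : i % (p1 * m1) < p2 * m2 := hP ▸ h1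
    have h2' : j % (q1 * n1) < q2 * n2 := hQ ▸ h2
    have := heq (i % (p1 * m1)) (j % (q1 * n1)) h1 h2 h1' h2'
    simp only [arrRep] at this
    simp only [hg]
    convert this using 4 <;>
      simp [Nat.mod_mod_of_dvd, hm1P, hn1Q, hm2P, hn2Q]
  -- vertical periods
  have hv1 : ∀ j i, g (i + m1) j = g i j := by
    intro j i; simp [hg, Nat.add_mod_right]
  have hv2 : ∀ j i, g (i + m2) j = g i j := by
    intro j i; rw [hgB, hgB]; simp [Nat.add_mod_right]
  have hh1 : ∀ i j, g i (j + n1) = g i j := by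
    intro i j; simp [hg, Nat.add_mod_right]
  have hh2 : ∀ i j, g i (j + n2) = g i j := by
    intro i j; rw [hgB, hgB]; simp [Nat.add_mod_right]
  set mg := Nat.gcd m1 m2 with hmg
  set ng := Nat.gcd n1 n2 with hng
  have hmgpos : 0 < mg := Nat.gcd_pos_of_pos_left _ hm1
  have hngpos : 0 < ng := Nat.gcd_pos_of_pos_left _ hn1
  have hvg : ∀ i j, g i j = g (i % mg) j := by
    intro i j
    exact per_mod (fun i => g i j) mg (per_gcd (fun i => g i j) m1 m2 (hv1 j) (hv2 j)) i
  have hhg : ∀ i j, g i j = g i (j % ng) := by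
    intro i j
    exact per_mod (fun j => g i j) ng (per_gcd (fun j => g i j) n1 n2 (hh1 i) (hh2 i)) j
  refine ⟨mg, ng, fun x => g x.1 x.2, m1 / mg, n1 / ng, m2 / mg, n2 / ng,
    hmgpos, hngpos,
    Nat.div_pos (Nat.le_of_dvd hm1 (Nat.gcd_dvd_left _ _)) hmgpos,
    Nat.div_pos (Nat.le_of_dvd hn1 (Nat.gcd_dvd_left _ _)) hngpos,
    Nat.div_pos (Nat.le_of_dvd hm2 (Nat.gcd_dvd_right _ _)) hmgpos,
    Nat.div_pos (Nat.le_of_dvd hn2 (Nat.gcd_dvd_right _ _)) hngpos, ?_, ?_⟩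
  · refine ⟨(Nat.div_mul_cancel (Nat.gcd_dvd_left m1 m2)).symm,
      (Nat.div_mul_cancel (Nat.gcd_dvd_left n1 n2)).symm, ?_⟩
    intro i j h1 h2 h1' h2'
    have hA : A (⟨i, h1⟩, ⟨j, h2⟩) = g i j := by
      simp [hg, Nat.mod_eq_of_lt h1, Nat.mod_eq_of_lt h2]
    rw [hA, hvg, hhg]
    simp [arrRep]
  · refine ⟨(Nat.div_mul_cancel (Nat.gcd_dvd_right m1 m2)).symm,
      (Nat.div_mul_cancel (Nat.gcd_dvd_right n1 n2)).symm, ?_⟩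
    intro i j h1 h2 h1' h2'
    have hB : B (⟨i, h1⟩, ⟨j, h2⟩) = g i j := by
      rw [hgB]; simp [Nat.mod_eq_of_lt h1, Nat.mod_eq_of_lt h2]
    rw [hB, hvg, hhg]
    simp [arrRep]
end

section
/- If A = C^{r₁×s₁} and B = C^{r₂×s₂} for a nonempty array C and positive integers r₁,s₁,r₂,s₂, then there exist positive integers t₁,u₁,t₂,u₂ such that A^{t₁×u₁} ⊖ B^{t₂×u₂} = B^{t₂×u₂} ⊖ A^{t₁×u₁}, where ⊖ denotes horizontal concatenation of arrays with equal numbers of rows. -/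
theorem stmt7 {σ : Type*} {m1 n1 m2 n2 mc nc : ℕ} (hmc : 0 < mc) (hnc : 0 < nc)
    (A : Fin m1 × Fin n1 → σ) (B : Fin m2 × Fin n2 → σ) (C : Fin mc × Fin nc → σ)
    (r1 s1 r2 s2 : ℕ) (hr1 : 0 < r1) (hs1 : 0 < s1) (hr2 : 0 < r2) (hs2 : 0 < s2)
    (hA : arrEq A (arrRep C r1 s1)) (hB : arrEq B (arrRep C r2 s2)) :
    ∃ t1 u1 t2 u2 : ℕ, 0 < t1 ∧ 0 < u1 ∧ 0 < t2 ∧ 0 < u2 ∧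
      ∃ h : t1 * m1 = t2 * m2,
        arrEq (hcat h (arrRep A t1 u1) (arrRep B t2 u2))
              (hcat h.symm (arrRep B t2 u2) (arrRep A t1 u1)) := by
  obtain ⟨hm1, hn1, hvA⟩ := hA
  obtain ⟨hm2, hn2, hvB⟩ := hB
  subst hm1; subst hn1; subst hm2; subst hn2
  have keyA : ∀ i j (h1 : i < r2 * (r1 * mc)) (h2 : j < s2 * (s1 * nc)),
      arrRep A r2 s2 (⟨i, h1⟩, ⟨j, h2⟩) =
        C (⟨i % mc, Nat.mod_lt _ hmc⟩, ⟨j % nc, Nat.mod_lt _ hnc⟩) := by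
    intro i j h1 h2
    show A (⟨i % (r1 * mc), _⟩, ⟨j % (s1 * nc), _⟩) = _
    rw [hvA _ _ _ _ (Nat.mod_lt _ (by positivity)) (Nat.mod_lt _ (by positivity))]
    show C _ = _
    apply congrArg
    refine Prod.ext ?_ ?_
    · exact Fin.ext (Nat.mod_mod_of_dvd i (dvd_mul_left mc r1))
    · exact Fin.ext (Nat.mod_mod_of_dvd j (dvd_mul_left nc s1))
  have keyB : ∀ i j (h1 : i < r1 * (r2 * mc)) (h2 : j < s1 * (s2 * nc)),
      arrRep B r1 s1 (⟨i, h1⟩, ⟨j, h2⟩) =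
        C (⟨i % mc, Nat.mod_lt _ hmc⟩, ⟨j % nc, Nat.mod_lt _ hnc⟩) := by
    intro i j h1 h2
    show B (⟨i % (r2 * mc), _⟩, ⟨j % (s2 * nc), _⟩) = _
    rw [hvB _ _ _ _ (Nat.mod_lt _ (by positivity)) (Nat.mod_lt _ (by positivity))]
    show C _ = _
    apply congrArg
    refine Prod.ext ?_ ?_
    · exact Fin.ext (Nat.mod_mod_of_dvd i (dvd_mul_left mc r2))
    · exact Fin.ext (Nat.mod_mod_of_dvd j (dvd_mul_left nc s2))
  have sub_mod : ∀ a b n : ℕ, n ∣ b → b ≤ a → (a - b) % n = a % n := by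
    intro a b n hd hle
    obtain ⟨k, rfl⟩ := hd
    conv_rhs => rw [← Nat.sub_add_cancel hle]
    rw [Nat.add_mul_mod_self_left]
  have hwidth : s2 * (s1 * nc) = s1 * (s2 * nc) := by ring
  refine ⟨r2, s2, r1, s1, hr2, hs2, hr1, hs1, by ring, by ring, Nat.add_comm _ _, ?_⟩
  intro i j h1 h2 h1' h2'
  simp only [hcat]
  split_ifs with hj1 hj2 hj2
  · rw [keyA, keyB]
  · omega
  · omega
  · rw [keyA, keyB]
    apply congrArg
    refine Prod.ext rfl (Fin.ext ?_)
    show (j - s2 * (s1 * nc)) % nc = (j - s1 * (s2 * nc)) % nc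
    rw [sub_mod _ _ _ (Dvd.dvd.mul_left (dvd_mul_left nc s1) s2) (by omega),
        sub_mod _ _ _ (Dvd.dvd.mul_left (dvd_mul_left nc s2) s1) (by omega)]
end

section
/- Let A be an m₁×n₁ array and B an m₂×n₂ array. If there exist positive integers t₁,u₁,t₂,u₂ such that A^{t₁×u₁} and B^{t₂×u₂} have the same number of rows and their horizontal concatenations in both orders are equal (A^{t₁×u₁} ⊚ B^{t₂×u₂} = B^{t₂×u₂} ⊚ A^{t₁×u₁}), then there exist positive integers p₁,q₁,p₂,q₂ with A^{p₁×q₁} = B^{p₂×q₂}. -/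
/-- Auxiliary: entry of the periodic extension of an array. -/
def ent {σ : Type*} {m n : ℕ} (hm : 0 < m) (hn : 0 < n) (A : Fin m × Fin n → σ)
    (i j : ℕ) : σ :=
  A (⟨i % m, Nat.mod_lt _ hm⟩, ⟨j % n, Nat.mod_lt _ hn⟩)

lemma ent_congr {σ : Type*} {m n : ℕ} (hm : 0 < m) (hn : 0 < n) (A : Fin m × Fin n → σ)
    {i i' j j' : ℕ} (hi : i % m = i' % m) (hj : j % n = j' % n) :
    ent hm hn A i j = ent hm hn A i' j' := by
  unfold ent
  exact congrArg A (Prod.ext (Fin.ext hi) (Fin.ext hj))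

lemma mod_sub_of_dvd {n N j : ℕ} (hd : n ∣ N) (hj : N ≤ j) : (j - N) % n = j % n := by
  obtain ⟨k, rfl⟩ := hd
  conv_rhs => rw [← Nat.sub_add_cancel hj]
  rw [Nat.add_mul_mod_self_left]

theorem stmt8 {σ : Type*} {m1 n1 m2 n2 : ℕ}
    (hm1 : 0 < m1) (hn1 : 0 < n1) (hm2 : 0 < m2) (hn2 : 0 < n2)
    (A : Fin m1 × Fin n1 → σ) (B : Fin m2 × Fin n2 → σ)
    (h : ∃ t1 u1 t2 u2 : ℕ, 0 < t1 ∧ 0 < u1 ∧ 0 < t2 ∧ 0 < u2 ∧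
      ∃ hr : t1 * m1 = t2 * m2,
        arrEq (hcat hr (arrRep A t1 u1) (arrRep B t2 u2))
              (hcat hr.symm (arrRep B t2 u2) (arrRep A t1 u1))) :
    ∃ p1 q1 p2 q2 : ℕ, 0 < p1 ∧ 0 < q1 ∧ 0 < p2 ∧ 0 < q2 ∧
      arrEq (arrRep A p1 q1) (arrRep B p2 q2) := by
  obtain ⟨t1, u1, t2, u2, ht1, hu1, ht2, hu2, hr, heq⟩ := h
  set N1 := u1 * n1 with hN1def
  set N2 := u2 * n2 with hN2def
  have hN1 : 0 < N1 := Nat.mul_pos hu1 hn1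
  have hN2 : 0 < N2 := Nat.mul_pos hu2 hn2
  have hdv1 : n1 ∣ N1 := dvd_mul_left n1 u1
  have hdv2 : n2 ∣ N2 := dvd_mul_left n2 u2
  -- extract the four pointwise facts from the hypothesis
  have hAB : ∀ i j, i < t1 * m1 → j < N1 → j < N2 →
      ent hm1 hn1 A i j = ent hm2 hn2 B i j := by
    intro i j hi h1 h2
    have hi' : i < t2 * m2 := hr ▸ hi
    have := heq.2.2 i j hi (by omega) hi' (by omega)
    simp only [hcat] at this
    rw [dif_pos h1, dif_pos h2] at this
    exact this
  have hAA : ∀ i j, i < t1 * m1 → N2 ≤ j → j < N1 →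
      ent hm1 hn1 A i j = ent hm1 hn1 A i (j - N2) := by
    intro i j hi h2 h1
    have hi' : i < t2 * m2 := hr ▸ hi
    have := heq.2.2 i j hi (by omega) hi' (by omega)
    simp only [hcat] at this
    rw [dif_pos h1, dif_neg (by omega)] at this
    exact this
  have hBB : ∀ i j, i < t1 * m1 → N1 ≤ j → j < N2 →
      ent hm2 hn2 B i (j - N1) = ent hm2 hn2 B i j := by
    intro i j hi h1 h2
    have hi' : i < t2 * m2 := hr ▸ hi
    have := heq.2.2 i j hi (by omega) hi' (by omega)
    simp only [hcat] at this
    rw [dif_neg (by omega), dif_pos h2] at this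
    exact this
  have hBA : ∀ i j, i < t1 * m1 → N1 ≤ j → N2 ≤ j → j < N1 + N2 →
      ent hm2 hn2 B i (j - N1) = ent hm1 hn1 A i (j - N2) := by
    intro i j hi h1 h2 hlt
    have hi' : i < t2 * m2 := hr ▸ hi
    have := heq.2.2 i j hi (by omega) hi' (by omega)
    simp only [hcat] at this
    rw [dif_neg (by omega), dif_neg (by omega)] at this
    exact this
  -- the main claim, by strong induction on the column index
  have key : ∀ j i, i < t1 * m1 → ent hm1 hn1 A i j = ent hm2 hn2 B i j := by
    intro j
    induction j using Nat.strong_induction_on with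
    | _ j IH =>
      intro i hi
      by_cases h1 : j < N1 <;> by_cases h2 : j < N2
      · exact hAB i j hi h1 h2
      · push_neg at h2
        calc ent hm1 hn1 A i j = ent hm1 hn1 A i (j - N2) := hAA i j hi h2 h1
          _ = ent hm2 hn2 B i (j - N2) := IH _ (by omega) i hi
          _ = ent hm2 hn2 B i j := ent_congr _ _ _ rfl (mod_sub_of_dvd hdv2 h2)
      · push_neg at h1
        calc ent hm1 hn1 A i j
            = ent hm1 hn1 A i (j - N1) := ent_congr _ _ _ rfl (mod_sub_of_dvd hdv1 h1).symm
          _ = ent hm2 hn2 B i (j - N1) := IH _ (by omega) i hi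
          _ = ent hm2 hn2 B i j := hBB i j hi h1 h2
      · push_neg at h1 h2
        by_cases hlt : j < N1 + N2
        · calc ent hm1 hn1 A i j
              = ent hm1 hn1 A i (j - N1) := ent_congr _ _ _ rfl (mod_sub_of_dvd hdv1 h1).symm
            _ = ent hm2 hn2 B i (j - N1) := IH _ (by omega) i hi
            _ = ent hm1 hn1 A i (j - N2) := hBA i j hi h1 h2 hlt
            _ = ent hm2 hn2 B i (j - N2) := IH _ (by omega) i hi
            _ = ent hm2 hn2 B i j := ent_congr _ _ _ rfl (mod_sub_of_dvd hdv2 h2)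
        · push_neg at hlt
          calc ent hm1 hn1 A i j
              = ent hm1 hn1 A i (j - N1) := ent_congr _ _ _ rfl (mod_sub_of_dvd hdv1 h1).symm
            _ = ent hm2 hn2 B i (j - N1) := IH _ (by omega) i hi
            _ = ent hm2 hn2 B i (j - N1 - N2) :=
                (ent_congr _ _ _ rfl (mod_sub_of_dvd hdv2 (by omega))).symm
            _ = ent hm1 hn1 A i (j - N1 - N2) := (IH _ (by omega) i hi).symm
            _ = ent hm1 hn1 A i (j - N2) := by
                refine ent_congr _ _ _ rfl ?_
                rw [show j - N1 - N2 = j - N2 - N1 by omega]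
                exact mod_sub_of_dvd hdv1 (by omega)
            _ = ent hm2 hn2 B i (j - N2) := IH _ (by omega) i hi
            _ = ent hm2 hn2 B i j := ent_congr _ _ _ rfl (mod_sub_of_dvd hdv2 h2)
  refine ⟨t1, u1 * N2, t2, u2 * N1, ht1, Nat.mul_pos hu1 hN2, ht2, Nat.mul_pos hu2 hN1,
    hr, by rw [hN1def, hN2def]; ring, ?_⟩
  intro i j hi1 hj1 hi2 hj2
  exact key j i hi1
end

section
/- Let A and B be nonempty arrays with the same number of rows. Then A ⊚ B = B ⊚ A (horizontal concatenation) if and only if there exist a nonempty array C and positive integers e, f such that A = C^{1×e} and B = C^{1×f}. -/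
lemma wpow_zero {σ : Type*} (z : List σ) : wpow z 0 = [] := rfl

lemma wpow_succ {σ : Type*} (z : List σ) (k : ℕ) : wpow z (k+1) = z ++ wpow z k := by
  simp [wpow, List.replicate_succ]

lemma wpow_one {σ : Type*} (z : List σ) : wpow z 1 = z := by simp [wpow_succ, wpow_zero]

lemma length_wpow {σ : Type*} (z : List σ) (k : ℕ) : (wpow z k).length = k * z.length := by
  induction k with
  | zero => simp [wpow_zero]
  | succ k ih => simp [wpow_succ, ih]; ring

lemma wpow_add {σ : Type*} (z : List σ) (a b : ℕ) :
    wpow z (a + b) = wpow z a ++ wpow z b := by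
  induction a with
  | zero => simp [wpow_zero]
  | succ a ih => rw [Nat.succ_add, wpow_succ, wpow_succ, ih, List.append_assoc]

lemma getElem_wpow {σ : Type*} (z : List σ) (hz : z ≠ []) (k j : ℕ) (h : j < k * z.length) :
    (wpow z k)[j]'(by rw [length_wpow]; exact h) =
      z[j % z.length]'(Nat.mod_lt _ (List.length_pos_iff.mpr hz)) := by
  induction k generalizing j with
  | zero => simp at h
  | succ k ih =>
    have hlen : wpow z (k+1) = z ++ wpow z k := wpow_succ z k
    rcases Nat.lt_or_ge j z.length with hj | hj
    · rw [List.getElem_of_eq hlen, List.getElem_append_left hj]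
      congr 1
      exact (Nat.mod_eq_of_lt hj).symm
    · have h' : j < k * z.length + z.length := by rw [Nat.succ_mul] at h; exact h
      have hlt : j - z.length < k * z.length := by omega
      rw [List.getElem_of_eq hlen, List.getElem_append_right hj]
      have heq : (z ++ wpow z k).length - z.length = (wpow z k).length := by
        simp
      rw [ih (j - z.length) hlt]
      simp only [Nat.mod_eq_sub_mod hj]

lemma comm_step {σ : Type*} {x y : List σ} (h : x ++ y = y ++ x) (hle : x.length ≤ y.length) :
    ∃ z, y = x ++ z ∧ x ++ z = z ++ x := by
  have h1 : y.take x.length = x := by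
    have h2 : (x ++ y).take x.length = x := List.take_left
    rw [h, List.take_append_of_le_length hle] at h2
    exact h2
  have hy2 : y = x ++ y.drop x.length := by
    conv_lhs => rw [← List.take_append_drop x.length y, h1]
  refine ⟨y.drop x.length, hy2, ?_⟩
  have h3 : x ++ (x ++ y.drop x.length) = (x ++ y.drop x.length) ++ x := by
    rw [← hy2]; exact h
  rw [List.append_assoc] at h3
  exact List.append_cancel_left h3

lemma comm_full {σ : Type*} : ∀ n (x y : List σ), x.length + y.length ≤ n →
    x ++ y = y ++ x → x ≠ [] → y ≠ [] →
    ∃ (w : List σ) (e f : ℕ), w ≠ [] ∧ 0 < e ∧ 0 < f ∧ x = wpow w e ∧ y = wpow w f := by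
  intro n
  induction n with
  | zero =>
    intro x y hn h hx hy
    have := List.length_pos_iff.mpr hx; omega
  | succ n ih =>
    intro x y hn h hx hy
    have hxp := List.length_pos_iff.mpr hx
    have hyp := List.length_pos_iff.mpr hy
    rcases le_total x.length y.length with hle | hle
    · obtain ⟨z, hy2, hcomm⟩ := comm_step h hle
      have hzl : y.length = x.length + z.length := by rw [hy2]; simp
      by_cases hz : z = []
      · refine ⟨x, 1, 1, hx, one_pos, one_pos, (wpow_one x).symm, ?_⟩
        rw [hy2, hz, wpow_one, List.append_nil]
      · obtain ⟨w, e, f, hw, he, hf, hxw, hzw⟩ := ih x z (by omega) hcomm hx hz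
        refine ⟨w, e, e + f, hw, he, by omega, hxw, ?_⟩
        rw [hy2, hxw, hzw, ← wpow_add]
    · obtain ⟨z, hx2, hcomm⟩ := comm_step h.symm hle
      have hzl : x.length = y.length + z.length := by rw [hx2]; simp
      by_cases hz : z = []
      · refine ⟨y, 1, 1, hy, one_pos, one_pos, ?_, (wpow_one y).symm⟩
        rw [hx2, hz, wpow_one, List.append_nil]
      · obtain ⟨w, e, f, hw, he, hf, hyw, hzw⟩ := ih y z (by omega) hcomm hy hz
        refine ⟨w, e + f, e, hw, by omega, he, ?_, hyw⟩
        rw [hx2, hyw, hzw, ← wpow_add]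

lemma colWord_hcat {σ : Type*} {m n1 n2 : ℕ} (A : Fin m × Fin n1 → σ)
    (B : Fin m × Fin n2 → σ) :
    colWord (hcat rfl A B) = colWord A ++ colWord B := by
  apply List.ext_getElem (by simp [colWord])
  intro j hj1 hj2
  rcases Nat.lt_or_ge j n1 with hc | hc
  · rw [List.getElem_append_left (show j < (colWord A).length by simp [colWord, hc])]
    simp only [colWord, List.getElem_ofFn]
    funext i
    simp [hcat, hc]
  · rw [List.getElem_append_right (show (colWord A).length ≤ j by simp [colWord]; omega)]
    simp only [colWord, List.getElem_ofFn]
    funext i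
    simp only [hcat]
    rw [dif_neg (by simp; omega)]
    simp [colWord]

theorem stmt9 {σ : Type*} {m n1 n2 : ℕ} (hm : 0 < m) (hn1 : 0 < n1) (hn2 : 0 < n2)
    (A : Fin m × Fin n1 → σ) (B : Fin m × Fin n2 → σ) :
    arrEq (hcat rfl A B) (hcat rfl B A) ↔
      ∃ (mc nc : ℕ) (C : Fin mc × Fin nc → σ) (e f : ℕ),
        0 < mc ∧ 0 < nc ∧ 0 < e ∧ 0 < f ∧
        arrEq A (arrRep C 1 e) ∧ arrEq B (arrRep C 1 f) := by
  constructor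
  · rintro ⟨-, -, hpt⟩
    have hxl : (colWord A).length = n1 := by simp [colWord]
    have hyl : (colWord B).length = n2 := by simp [colWord]
    have hcc : colWord (hcat rfl A B) = colWord (hcat rfl B A) := by
      apply List.ext_getElem (by simp [colWord]; omega)
      intro j hj1 hj2
      simp only [colWord, List.getElem_ofFn]
      funext i
      exact hpt i.val j i.isLt (by simpa [colWord] using hj1) i.isLt
        (by simp [colWord] at hj2; omega)
    have hxy : colWord A ++ colWord B = colWord B ++ colWord A := by
      rw [← colWord_hcat A B, ← colWord_hcat B A, hcc]
    have hx : colWord A ≠ [] := by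
      intro h; rw [h] at hxl; simp at hxl; omega
    have hy : colWord B ≠ [] := by
      intro h; rw [h] at hyl; simp at hyl; omega
    obtain ⟨w, e, f, hw, he, hf, hxw, hyw⟩ :=
      comm_full ((colWord A).length + (colWord B).length) _ _ le_rfl hxy hx hy
    have hwp : 0 < w.length := List.length_pos_iff.mpr hw
    have hn1' : n1 = e * w.length := by rw [← hxl, hxw, length_wpow]
    have hn2' : n2 = f * w.length := by rw [← hyl, hyw, length_wpow]
    refine ⟨m, w.length, fun p => (w[p.2.val]'p.2.isLt) p.1, e, f, hm, hwp, he, hf,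
      ⟨(one_mul m).symm, hn1', ?_⟩, ⟨(one_mul m).symm, hn2', ?_⟩⟩
    · intro i j h1 h2 h1' h2'
      show A (⟨i, h1⟩, ⟨j, h2⟩) =
        (w[j % w.length]'(Nat.mod_lt _ hwp)) ⟨i % m, Nat.mod_lt _ hm⟩
      have him : (⟨i % m, Nat.mod_lt _ hm⟩ : Fin m) = ⟨i, h1⟩ :=
        Fin.ext (Nat.mod_eq_of_lt h1)
      rw [him]
      have hAx : A (⟨i, h1⟩, ⟨j, h2⟩) =
          ((colWord A)[j]'(by rw [hxl]; exact h2)) ⟨i, h1⟩ := by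
        exact (congrFun (List.getElem_ofFn (f := fun (j : Fin n1) (i : Fin m) => A (i, j)) (by simp; omega)) ⟨i, h1⟩).symm
      rw [hAx]
      have hstep : (colWord A)[j]'(by rw [hxl]; exact h2) =
          w[j % w.length]'(Nat.mod_lt _ hwp) := by
        have h2'' : j < e * w.length := by omega
        calc (colWord A)[j]'(by rw [hxl]; exact h2)
            = (wpow w e)[j]'(by rw [length_wpow]; exact h2'') := by simp only [hxw]
          _ = w[j % w.length]'(Nat.mod_lt _ hwp) := getElem_wpow w hw e j h2''
      rw [hstep]
    · intro i j h1 h2 h1' h2'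
      show B (⟨i, h1⟩, ⟨j, h2⟩) =
        (w[j % w.length]'(Nat.mod_lt _ hwp)) ⟨i % m, Nat.mod_lt _ hm⟩
      have him : (⟨i % m, Nat.mod_lt _ hm⟩ : Fin m) = ⟨i, h1⟩ :=
        Fin.ext (Nat.mod_eq_of_lt h1)
      rw [him]
      have hBx : B (⟨i, h1⟩, ⟨j, h2⟩) =
          ((colWord B)[j]'(by rw [hyl]; exact h2)) ⟨i, h1⟩ := by
        exact (congrFun (List.getElem_ofFn (f := fun (j : Fin n2) (i : Fin m) => B (i, j)) (by simp; omega)) ⟨i, h1⟩).symm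
      rw [hBx]
      have hstep : (colWord B)[j]'(by rw [hyl]; exact h2) =
          w[j % w.length]'(Nat.mod_lt _ hwp) := by
        have h2'' : j < f * w.length := by omega
        calc (colWord B)[j]'(by rw [hyl]; exact h2)
            = (wpow w f)[j]'(by rw [length_wpow]; exact h2'') := by simp only [hyw]
          _ = w[j % w.length]'(Nat.mod_lt _ hwp) := getElem_wpow w hw f j h2''
      rw [hstep]
  · rintro ⟨mc, nc, C, e, f, hmc, hnc, he, hf, ⟨hmA, hnA, hA⟩, ⟨hmB, hnB, hB⟩⟩
    have hm' : m = mc := by omega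
    refine ⟨rfl, by omega, ?_⟩
    intro i j h1 h2 h1' h2'
    have key : ∀ (j' : ℕ) (hj' : j' < n1 + n2),
        hcat rfl A B (⟨i, h1⟩, ⟨j', hj'⟩) =
          C (⟨i % mc, Nat.mod_lt _ (by omega)⟩, ⟨j' % nc, Nat.mod_lt _ hnc⟩) := by
      intro j' hj'
      simp only [hcat]
      split
      · rename_i hlt
        rw [hA i j' h1 hlt (by omega) (by omega)]
        rfl
      · rename_i hge
        rw [hB i (j' - n1) h1 (by omega) (by omega) (by omega)]
        simp only [arrRep]
        congr 2
        exact Fin.ext (show ((j' - n1) % nc : ℕ) = j' % nc by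
          rw [hnA, mul_comm e nc]; exact Nat.sub_mul_mod (by rw [mul_comm]; omega))
    have key' : ∀ (j' : ℕ) (hj' : j' < n2 + n1),
        hcat rfl B A (⟨i, h1⟩, ⟨j', hj'⟩) =
          C (⟨i % mc, Nat.mod_lt _ (by omega)⟩, ⟨j' % nc, Nat.mod_lt _ hnc⟩) := by
      intro j' hj'
      simp only [hcat]
      split
      · rename_i hlt
        rw [hB i j' h1 hlt (by omega) (by omega)]
        rfl
      · rename_i hge
        rw [hA i (j' - n2) h1 (by omega) (by omega) (by omega)]
        simp only [arrRep]
        congr 2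
        exact Fin.ext (show ((j' - n2) % nc : ℕ) = j' % nc by
          rw [hnB, mul_comm f nc]; exact Nat.sub_mul_mod (by rw [mul_comm]; omega))
    rw [key j h2, key' j h2']
end

section
/- Every nonempty array A (of dimension m×n with m,n ≥ 1) can be written as A = C^{i×j} for a unique primitive array C and positive integers i, j. -/
section PeriodAux
variable {α : Type*}

/-- `p` is a period of the ℕ-indexed function `g`. -/
def NPer (g : ℕ → α) (p : ℕ) : Prop := ∀ r, g (r + p) = g r

theorem nper_mul {g : ℕ → α} {p : ℕ} (h : NPer g p) (a r : ℕ) :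
    g (r + a * p) = g r := by
  induction a with
  | zero => simp
  | succ a ih => rw [Nat.succ_mul, ← Nat.add_assoc, h, ih]

theorem bezout_nat (p q : ℕ) (hp : 0 < p) (hq : 0 < q) :
    ∃ a b : ℕ, a * p = Nat.gcd p q + b * q := by
  have h := Nat.gcd_eq_gcd_ab p q
  set x := Nat.gcdA p q with hx
  set y := Nat.gcdB p q with hy
  set k : ℤ := x.natAbs + y.natAbs + 1 with hk
  have hq1 : (1 : ℤ) ≤ q := by exact_mod_cast hq
  have hp1 : (1 : ℤ) ≤ p := by exact_mod_cast hp
  have hkx : (x.natAbs : ℤ) + 1 ≤ k := by simp [hk]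
  have hky : (y.natAbs : ℤ) + 1 ≤ k := by simp [hk]
  have hx1 : -(x.natAbs : ℤ) ≤ x := by rw [← Int.abs_eq_natAbs]; exact neg_abs_le x
  have hy1 : y ≤ (y.natAbs : ℤ) := by rw [← Int.abs_eq_natAbs]; exact le_abs_self y
  have h1 : 0 ≤ x + k * q := by nlinarith
  have h2 : 0 ≤ k * p - y := by nlinarith
  refine ⟨(x + k * q).toNat, (k * p - y).toNat, ?_⟩
  have : ((x + k * q).toNat * p : ℤ) = (Nat.gcd p q : ℤ) + (k * p - y).toNat * q := by
    rw [Int.toNat_of_nonneg h1, Int.toNat_of_nonneg h2]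
    rw [h]; ring
  exact_mod_cast this

theorem nper_gcd {g : ℕ → α} {p q : ℕ} (hp : 0 < p) (hq : 0 < q)
    (h1 : NPer g p) (h2 : NPer g q) : NPer g (Nat.gcd p q) := by
  obtain ⟨a, b, hab⟩ := bezout_nat p q hp hq
  intro r
  have e1 : g (r + Nat.gcd p q + b * q) = g (r + Nat.gcd p q) := nper_mul h2 b _
  have e2 : g (r + a * p) = g r := nper_mul h1 a r
  have e3 : r + Nat.gcd p q + b * q = r + a * p := by omega
  rw [← e1, e3, e2]
end PeriodAux

section ArrAux
variable {σ : Type*}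

/-- The rows of `A`, read cyclically, as a ℕ-indexed sequence. -/
def gfun {m n : ℕ} (hm : 0 < m) (A : Fin m × Fin n → σ) : ℕ → (Fin n → σ) :=
  fun r c => A (⟨r % m, Nat.mod_lt _ hm⟩, c)

/-- `p` is a "good" vertical period of `A`. -/
def VGood {m n : ℕ} (hm : 0 < m) (A : Fin m × Fin n → σ) (p : ℕ) : Prop :=
  0 < p ∧ p ∣ m ∧ NPer (gfun hm A) p

theorem vgood_mod {m n : ℕ} {hm : 0 < m} {A : Fin m × Fin n → σ} {p : ℕ}
    (h : VGood hm A p) :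
    ∀ (r : ℕ) (hr : r < m) (hr' : r % p < m) (c : Fin n),
      A (⟨r, hr⟩, c) = A (⟨r % p, hr'⟩, c) := by
  obtain ⟨hp, hdvd, hper⟩ := h
  intro r hr hr' c
  have e := nper_mul hper (r / p) (r % p)
  rw [Nat.mod_add_div' r p] at e
  have e2 := congrFun e c
  simp only [gfun] at e2
  simp only [Nat.mod_eq_of_lt hr, Nat.mod_eq_of_lt hr'] at e2
  exact e2

theorem vgood_of_mod {m n : ℕ} (hm : 0 < m) (A : Fin m × Fin n → σ) {p : ℕ}
    (hp : 0 < p) (hdvd : p ∣ m)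
    (h : ∀ (r : ℕ) (hr : r < m) (hr' : r % p < m) (c : Fin n),
      A (⟨r, hr⟩, c) = A (⟨r % p, hr'⟩, c)) : VGood hm A p := by
  have hpm : p ≤ m := Nat.le_of_dvd hm hdvd
  refine ⟨hp, hdvd, fun r => funext fun c => ?_⟩
  have hlt : ∀ s : ℕ, s % m % p < m := fun s =>
    lt_of_lt_of_le (Nat.mod_lt _ hp) hpm
  have h1 := h ((r + p) % m) (Nat.mod_lt _ hm) (hlt _) c
  have h2 := h (r % m) (Nat.mod_lt _ hm) (hlt _) c
  have key : (r + p) % m % p = r % m % p := by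
    rw [Nat.mod_mod_of_dvd _ hdvd, Nat.mod_mod_of_dvd _ hdvd, Nat.add_mod_right]
  simp only [gfun]
  rw [h1, h2]
  congr 2
  exact Fin.ext key

theorem vgood_self {m n : ℕ} (hm : 0 < m) (A : Fin m × Fin n → σ) :
    VGood hm A m :=
  ⟨hm, dvd_refl m, fun r => funext fun c => by simp [gfun, Nat.add_mod_right]⟩

theorem exists_min_vgood {m n : ℕ} (hm : 0 < m) (A : Fin m × Fin n → σ) :
    ∃ d, VGood hm A d ∧ ∀ p, VGood hm A p → d ∣ p := by
  classical
  have hex : ∃ p, VGood hm A p := ⟨m, vgood_self hm A⟩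
  refine ⟨Nat.find hex, Nat.find_spec hex, fun p hp => ?_⟩
  set d := Nat.find hex with hd
  have hdg : VGood hm A d := Nat.find_spec hex
  have hg : VGood hm A (Nat.gcd d p) :=
    ⟨Nat.gcd_pos_of_pos_left _ hdg.1, dvd_trans (Nat.gcd_dvd_left d p) hdg.2.1,
     nper_gcd hdg.1 hp.1 hdg.2.2 hp.2.2⟩
  have hle : d ≤ Nat.gcd d p := Nat.find_min' hex hg
  have hge : Nat.gcd d p ≤ d := Nat.le_of_dvd hdg.1 (Nat.gcd_dvd_left d p)
  have : Nat.gcd d p = d := le_antisymm hge hle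
  rw [← this]
  exact Nat.gcd_dvd_right d p

/-- Transpose. -/
def trp {m n : ℕ} (A : Fin m × Fin n → σ) : Fin n × Fin m → σ := fun x => A (x.2, x.1)

end ArrAux

theorem acongr {σ : Type*} {m n : ℕ} (A : Fin m × Fin n → σ) {r1 r2 c1 c2 : ℕ}
    (hr : r1 = r2) (hc : c1 = c2) (p1 : r1 < m) (p2 : c1 < n) (q1 : r2 < m) (q2 : c2 < n) :
    A (⟨r1, p1⟩, ⟨c1, p2⟩) = A (⟨r2, q1⟩, ⟨c2, q2⟩) := by subst hr; subst hc; rfl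

theorem stmt12 {σ : Type*} {m n : ℕ} (hm : 0 < m) (hn : 0 < n)
    (A : Fin m × Fin n → σ) :
    ∃ (mc nc : ℕ) (C : Fin mc × Fin nc → σ) (i j : ℕ), 0 < i ∧ 0 < j ∧
      ArrPrimitive C ∧ arrEq A (arrRep C i j) ∧
      ∀ (mc' nc' : ℕ) (C' : Fin mc' × Fin nc' → σ) (i' j' : ℕ), 0 < i' → 0 < j' →
        ArrPrimitive C' → arrEq A (arrRep C' i' j') →
        arrEq C C' ∧ i = i' ∧ j = j' := by
  obtain ⟨dv, hdv, hdvmin⟩ := exists_min_vgood hm A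
  obtain ⟨dh, hdh, hdhmin⟩ := exists_min_vgood hn (trp A)
  have hdvpos : 0 < dv := hdv.1
  have hdhpos : 0 < dh := hdh.1
  have hdvm : dv ≤ m := Nat.le_of_dvd hm hdv.2.1
  have hdhn : dh ≤ n := Nat.le_of_dvd hn hdh.2.1
  -- two-index versions of the periodicity facts
  have hAv : ∀ (r c : ℕ) (hr : r < m) (hc : c < n) (hr' : r % dv < m),
      A (⟨r, hr⟩, ⟨c, hc⟩) = A (⟨r % dv, hr'⟩, ⟨c, hc⟩) :=
    fun r c hr hc hr' => vgood_mod hdv r hr hr' ⟨c, hc⟩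
  have hAh : ∀ (r c : ℕ) (hr : r < m) (hc : c < n) (hc' : c % dh < n),
      A (⟨r, hr⟩, ⟨c, hc⟩) = A (⟨r, hr⟩, ⟨c % dh, hc'⟩) :=
    fun r c hr hc hc' => vgood_mod hdh c hc hc' ⟨r, hr⟩
  have hkey : ∀ (r c : ℕ) (hr : r < m) (hc : c < n) (hr' : r % dv < m) (hc' : c % dh < n),
      A (⟨r, hr⟩, ⟨c, hc⟩) = A (⟨r % dv, hr'⟩, ⟨c % dh, hc'⟩) := by
    intro r c hr hc hr' hc'
    rw [hAv r c hr hc hr', hAh _ _ hr' _ hc']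
  set i := m / dv with hi
  set j := n / dh with hj
  have him : i * dv = m := Nat.div_mul_cancel hdv.2.1
  have hjn : j * dh = n := Nat.div_mul_cancel hdh.2.1
  have hipos : 0 < i := Nat.div_pos hdvm hdvpos
  have hjpos : 0 < j := Nat.div_pos hdhn hdhpos
  refine ⟨dv, dh, fun x => A (⟨x.1.1, lt_of_lt_of_le x.1.2 hdvm⟩,
    ⟨x.2.1, lt_of_lt_of_le x.2.2 hdhn⟩), i, j, hipos, hjpos, ?_, ?_, ?_⟩
  · -- primitivity
    intro m' n' p q B hp hq hEq
    obtain ⟨e1, e2, hent⟩ := hEq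
    have hm' : 0 < m' := by
      rcases Nat.eq_zero_or_pos m' with h | h
      · subst h; simp at e1; omega
      · exact h
    have hn' : 0 < n' := by
      rcases Nat.eq_zero_or_pos n' with h | h
      · subst h; simp at e2; omega
      · exact h
    have hm'dv : m' ∣ dv := ⟨p, by rw [e1, Nat.mul_comm]⟩
    have hn'dh : n' ∣ dh := ⟨q, by rw [e2, Nat.mul_comm]⟩
    have hm'm : m' ∣ m := dvd_trans hm'dv hdv.2.1
    have hn'n : n' ∣ n := dvd_trans hn'dh hdh.2.1
    -- A (r, c) = B (r % m', c % n')
    have hAB : ∀ (r c : ℕ) (hr : r < m) (hc : c < n) (hr2 : r % m' < m') (hc2 : c % n' < n'),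
        A (⟨r, hr⟩, ⟨c, hc⟩) = B (⟨r % m', hr2⟩, ⟨c % n', hc2⟩) := by
      intro r c hr hc hr2 hc2
      have s1 := hkey r c hr hc (lt_of_lt_of_le (Nat.mod_lt _ hdvpos) hdvm)
        (lt_of_lt_of_le (Nat.mod_lt _ hdhpos) hdhn)
      have s2 := hent (r % dv) (c % dh) (Nat.mod_lt _ hdvpos) (Nat.mod_lt _ hdhpos)
        (e1 ▸ Nat.mod_lt _ hdvpos) (e2 ▸ Nat.mod_lt _ hdhpos)
      rw [s1]
      refine s2.trans ?_
      show B (⟨r % dv % m', _⟩, ⟨c % dh % n', _⟩) = _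
      exact acongr B (Nat.mod_mod_of_dvd _ hm'dv) (Nat.mod_mod_of_dvd _ hn'dh) _ _ _ _
    have hVm' : VGood hm A m' := by
      refine vgood_of_mod hm A hm' hm'm ?_
      intro r hr hr' c
      obtain ⟨c, hc⟩ := c
      rw [hAB r c hr hc (Nat.mod_lt _ hm') (Nat.mod_lt _ hn'),
          hAB (r % m') c hr' hc (Nat.mod_lt _ hm') (Nat.mod_lt _ hn')]
      exact (acongr B (Nat.mod_mod_of_dvd _ dvd_rfl) rfl _ _ _ _).symm
    have hVn' : VGood hn (trp A) n' := by
      refine vgood_of_mod hn (trp A) hn' hn'n ?_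
      intro c hc hc' r
      obtain ⟨r, hr⟩ := r
      show A (⟨r, hr⟩, ⟨c, hc⟩) = A (⟨r, hr⟩, ⟨c % n', hc'⟩)
      rw [hAB r c hr hc (Nat.mod_lt _ hm') (Nat.mod_lt _ hn'),
          hAB r (c % n') hr hc' (Nat.mod_lt _ hm') (Nat.mod_lt _ hn')]
      exact (acongr B rfl (Nat.mod_mod_of_dvd _ dvd_rfl) _ _ _ _).symm
    have hdvm' : dv ∣ m' := hdvmin m' hVm'
    have hdhn' : dh ∣ n' := hdhmin n' hVn'
    have hdveq : dv = m' := Nat.dvd_antisymm hdvm' hm'dv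
    have hdheq : dh = n' := Nat.dvd_antisymm hdhn' hn'dh
    constructor
    · have h2 : p * m' = 1 * m' := by rw [one_mul, ← e1, hdveq]
      exact Nat.eq_of_mul_eq_mul_right hm' h2
    · have h2 : q * n' = 1 * n' := by rw [one_mul, ← e2, hdheq]
      exact Nat.eq_of_mul_eq_mul_right hn' h2
  · -- A = C^{i×j}
    refine ⟨him.symm, hjn.symm, ?_⟩
    intro r c h1 h2 h1' h2'
    exact hkey r c h1 h2 (lt_of_lt_of_le (Nat.mod_lt _ hdvpos) hdvm)
      (lt_of_lt_of_le (Nat.mod_lt _ hdhpos) hdhn)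
  · -- uniqueness
    intro mc' nc' C' i' j' hi' hj' hprim' hEq'
    obtain ⟨f1, f2, fent⟩ := hEq'
    have hmc' : 0 < mc' := by
      rcases Nat.eq_zero_or_pos mc' with h | h
      · subst h; simp at f1; omega
      · exact h
    have hnc' : 0 < nc' := by
      rcases Nat.eq_zero_or_pos nc' with h | h
      · subst h; simp at f2; omega
      · exact h
    have hmc'm : mc' ∣ m := ⟨i', by rw [f1, Nat.mul_comm]⟩
    have hnc'n : nc' ∣ n := ⟨j', by rw [f2, Nat.mul_comm]⟩
    have hmc'le : mc' ≤ m := Nat.le_of_dvd hm hmc'm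
    have hnc'le : nc' ≤ n := Nat.le_of_dvd hn hnc'n
    have hAC' : ∀ (r c : ℕ) (hr : r < m) (hc : c < n) (hr2 : r % mc' < mc') (hc2 : c % nc' < nc'),
        A (⟨r, hr⟩, ⟨c, hc⟩) = C' (⟨r % mc', hr2⟩, ⟨c % nc', hc2⟩) :=
      fun r c hr hc hr2 hc2 => fent r c hr hc (f1 ▸ hr) (f2 ▸ hc)
    have hVmc' : VGood hm A mc' := by
      refine vgood_of_mod hm A hmc' hmc'm ?_
      intro r hr hr' c
      obtain ⟨c, hc⟩ := c
      rw [hAC' r c hr hc (Nat.mod_lt _ hmc') (Nat.mod_lt _ hnc'),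
          hAC' (r % mc') c hr' hc (Nat.mod_lt _ hmc') (Nat.mod_lt _ hnc')]
      exact (acongr C' (Nat.mod_mod_of_dvd _ dvd_rfl) rfl _ _ _ _).symm
    have hVnc' : VGood hn (trp A) nc' := by
      refine vgood_of_mod hn (trp A) hnc' hnc'n ?_
      intro c hc hc' r
      obtain ⟨r, hr⟩ := r
      show A (⟨r, hr⟩, ⟨c, hc⟩) = A (⟨r, hr⟩, ⟨c % nc', hc'⟩)
      rw [hAC' r c hr hc (Nat.mod_lt _ hmc') (Nat.mod_lt _ hnc'),
          hAC' r (c % nc') hr hc' (Nat.mod_lt _ hmc') (Nat.mod_lt _ hnc')]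
      exact (acongr C' rfl (Nat.mod_mod_of_dvd _ dvd_rfl) _ _ _ _).symm
    have hdvmc' : dv ∣ mc' := hdvmin mc' hVmc'
    have hdhnc' : dh ∣ nc' := hdhmin nc' hVnc'
    have hdvle : dv ≤ mc' := Nat.le_of_dvd hmc' hdvmc'
    have hdhle : dh ≤ nc' := Nat.le_of_dvd hnc' hdhnc'
    -- C' restricted to nats, two-index version
    have hC'A : ∀ (r c : ℕ) (h1 : r < mc') (h2 : c < nc') (hr : r < m) (hc : c < n),
        C' (⟨r, h1⟩, ⟨c, h2⟩) = A (⟨r, hr⟩, ⟨c, hc⟩) := by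
      intro r c h1 h2 hr hc
      rw [hAC' r c hr hc (Nat.mod_lt _ hmc') (Nat.mod_lt _ hnc')]
      exact acongr C' (Nat.mod_eq_of_lt h1).symm (Nat.mod_eq_of_lt h2).symm _ _ _ _
    -- vertical: mc' = dv
    have hmc'dv : mc' = dv := by
      have hp1 := hprim' dv nc' (mc' / dv) 1
        (fun x => C' (⟨x.1.1, lt_of_lt_of_le x.1.2 hdvle⟩, x.2))
        (Nat.div_pos hdvle hdvpos) one_pos ?_
      · have := hp1.1
        have h2 : mc' / dv * dv = mc' := Nat.div_mul_cancel hdvmc'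
        rw [this, one_mul] at h2
        exact h2.symm
      · refine ⟨(Nat.div_mul_cancel hdvmc').symm, (one_mul nc').symm, ?_⟩
        intro r c h1 h2 h1' h2'
        show C' (⟨r, h1⟩, ⟨c, h2⟩) = C' (⟨r % dv, _⟩, ⟨c % nc', _⟩)
        have hr : r < m := lt_of_lt_of_le h1 hmc'le
        have hc : c < n := lt_of_lt_of_le h2 hnc'le
        have hrdv : r % dv < m := lt_of_lt_of_le (Nat.mod_lt _ hdvpos) hdvm
        rw [hC'A r c h1 h2 hr hc, hAv r c hr hc hrdv,
            hAC' (r % dv) c hrdv hc (Nat.mod_lt _ hmc') (Nat.mod_lt _ hnc')]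
        exact acongr C' (Nat.mod_eq_of_lt (lt_of_lt_of_le (Nat.mod_lt _ hdvpos) hdvle)) rfl _ _ _ _
    -- horizontal: nc' = dh
    have hnc'dh : nc' = dh := by
      have hp1 := hprim' mc' dh 1 (nc' / dh)
        (fun x => C' (x.1, ⟨x.2.1, lt_of_lt_of_le x.2.2 hdhle⟩))
        one_pos (Nat.div_pos hdhle hdhpos) ?_
      · have := hp1.2
        have h2 : nc' / dh * dh = nc' := Nat.div_mul_cancel hdhnc'
        rw [this, one_mul] at h2
        exact h2.symm
      · refine ⟨(one_mul mc').symm, (Nat.div_mul_cancel hdhnc').symm, ?_⟩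
        intro r c h1 h2 h1' h2'
        show C' (⟨r, h1⟩, ⟨c, h2⟩) = C' (⟨r % mc', _⟩, ⟨c % dh, _⟩)
        have hr : r < m := lt_of_lt_of_le h1 hmc'le
        have hc : c < n := lt_of_lt_of_le h2 hnc'le
        have hcdh : c % dh < n := lt_of_lt_of_le (Nat.mod_lt _ hdhpos) hdhn
        rw [hC'A r c h1 h2 hr hc, hAh r c hr hc hcdh,
            hAC' r (c % dh) hr hcdh (Nat.mod_lt _ hmc') (Nat.mod_lt _ hnc')]
        exact acongr C' rfl (Nat.mod_eq_of_lt (lt_of_lt_of_le (Nat.mod_lt _ hdhpos) hdhle)) _ _ _ _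
    refine ⟨⟨hmc'dv.symm, hnc'dh.symm, ?_⟩, ?_, ?_⟩
    · intro r c h1 h2 h1' h2'
      show A (⟨r, _⟩, ⟨c, _⟩) = C' (⟨r, h1'⟩, ⟨c, h2'⟩)
      exact (hC'A r c h1' h2' (lt_of_lt_of_le h1 hdvm) (lt_of_lt_of_le h2 hdhn)).symm
    · have : i * dv = i' * dv := by rw [him, f1, hmc'dv]
      exact Nat.eq_of_mul_eq_mul_right hdvpos this
    · have : j * dh = j' * dh := by rw [hjn, f2, hnc'dh]
      exact Nat.eq_of_mul_eq_mul_right hdhpos this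
end

section
/- The number of primitive m×n arrays over a k-letter alphabet equals ∑_{d₁ | m} ∑_{d₂ | n} μ(d₁) μ(d₂) k^{mn/(d₁ d₂)}, where μ is the Möbius function. -/
namespace Stmt13

variable {k : ℕ}

/-- Extension of an array to a doubly periodic function on ℕ × ℕ. -/
def extA {m n : ℕ} (hm : 0 < m) (hn : 0 < n) (A : Fin m × Fin n → Fin k) :
    ℕ → ℕ → Fin k :=
  fun i j => A (⟨i % m, Nat.mod_lt _ hm⟩, ⟨j % n, Nat.mod_lt _ hn⟩)

def RowPer (f : ℕ → ℕ → Fin k) (a : ℕ) : Prop := ∀ i j, f (i + a) j = f i j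
def ColPer (f : ℕ → ℕ → Fin k) (b : ℕ) : Prop := ∀ i j, f i (j + b) = f i j

lemma arr_congr {m n : ℕ} (A : Fin m × Fin n → Fin k) {i i' j j' : ℕ}
    (hi : i < m) (hi' : i' < m) (hj : j < n) (hj' : j' < n)
    (e1 : i = i') (e2 : j = j') :
    A (⟨i, hi⟩, ⟨j, hj⟩) = A (⟨i', hi'⟩, ⟨j', hj'⟩) := by
  subst e1; subst e2; rfl

lemma extA_eq_self {m n : ℕ} (hm : 0 < m) (hn : 0 < n) (A : Fin m × Fin n → Fin k)
    {i j : ℕ} (hi : i < m) (hj : j < n) :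
    extA hm hn A i j = A (⟨i, hi⟩, ⟨j, hj⟩) :=
  arr_congr A _ _ _ _ (Nat.mod_eq_of_lt hi) (Nat.mod_eq_of_lt hj)

lemma extA_mod {m n : ℕ} (hm : 0 < m) (hn : 0 < n) (A : Fin m × Fin n → Fin k)
    (i j : ℕ) : extA hm hn A i j = extA hm hn A (i % m) (j % n) :=
  arr_congr A _ _ _ _ (Nat.mod_mod_of_dvd i dvd_rfl).symm (Nat.mod_mod_of_dvd j dvd_rfl).symm

lemma rowPer_extA {m n : ℕ} (hm : 0 < m) (hn : 0 < n) (A : Fin m × Fin n → Fin k) :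
    RowPer (extA hm hn A) m := fun i j =>
  arr_congr A _ _ _ _ (Nat.add_mod_right i m) rfl

lemma colPer_extA {m n : ℕ} (hm : 0 < m) (hn : 0 < n) (A : Fin m × Fin n → Fin k) :
    ColPer (extA hm hn A) n := fun i j =>
  arr_congr A _ _ _ _ rfl (Nat.add_mod_right j n)

lemma rowPer_mul {f : ℕ → ℕ → Fin k} {a : ℕ} (h : RowPer f a) (t i j : ℕ) :
    f (i + t * a) j = f i j := by
  induction t with
  | zero => simp
  | succ t ih => rw [Nat.succ_mul, ← Nat.add_assoc, h, ih]

lemma colPer_mul {f : ℕ → ℕ → Fin k} {b : ℕ} (h : ColPer f b) (t i j : ℕ) :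
    f i (j + t * b) = f i j := by
  induction t with
  | zero => simp
  | succ t ih => rw [Nat.succ_mul, ← Nat.add_assoc, h, ih]

lemma rowPer_mod {f : ℕ → ℕ → Fin k} {a : ℕ} (h : RowPer f a) (ha : 0 < a) (i j : ℕ) :
    f i j = f (i % a) j := by
  conv_lhs => rw [← Nat.mod_add_div i a]
  rw [Nat.mul_comm, rowPer_mul h]

lemma colPer_mod {f : ℕ → ℕ → Fin k} {b : ℕ} (h : ColPer f b) (hb : 0 < b) (i j : ℕ) :
    f i j = f i (j % b) := by
  conv_lhs => rw [← Nat.mod_add_div j b]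
  rw [Nat.mul_comm, colPer_mul h]

lemma nat_bezout (a b : ℕ) (ha : 0 < a) (hb : 0 < b) :
    ∃ u v : ℕ, u * a = Nat.gcd a b + v * b := by
  have h : (Nat.gcd a b : ℤ) = a * Nat.gcdA a b + b * Nat.gcdB a b := Nat.gcd_eq_gcd_ab a b
  set x := Nat.gcdA a b
  set y := Nat.gcdB a b
  obtain ⟨t, ht1, ht2⟩ : ∃ t : ℕ, 0 ≤ x + t * b ∧ y - t * a ≤ 0 := by
    refine ⟨(x.natAbs + y.natAbs + 1), ?_, ?_⟩
    · have h2 : (1:ℤ) ≤ b := by exact_mod_cast hb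
      push_cast
      nlinarith [neg_abs_le x, abs_nonneg x, abs_nonneg y]
    · have h2 : (1:ℤ) ≤ a := by exact_mod_cast ha
      push_cast
      nlinarith [le_abs_self y, abs_nonneg x, abs_nonneg y]
  refine ⟨(x + t * b).toNat, (t * a - y).toNat, ?_⟩
  have e1 : ((x + t * b).toNat : ℤ) = x + t * b := Int.toNat_of_nonneg ht1
  have e2 : ((t * a - y).toNat : ℤ) = t * a - y := Int.toNat_of_nonneg (by omega)
  have := h
  zify
  rw [e1, e2]
  push_cast at h ⊢
  ring_nf
  ring_nf at h
  linarith

lemma rowPer_gcd {f : ℕ → ℕ → Fin k} {a b : ℕ} (hfa : RowPer f a) (hfb : RowPer f b)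
    (ha : 0 < a) (hb : 0 < b) : RowPer f (Nat.gcd a b) := by
  obtain ⟨u, v, huv⟩ := nat_bezout a b ha hb
  intro i j
  have h1 : f (i + Nat.gcd a b + v * b) j = f (i + Nat.gcd a b) j := rowPer_mul hfb v _ j
  have h2 : f (i + u * a) j = f i j := rowPer_mul hfa u i j
  rw [← h1]
  rw [show i + Nat.gcd a b + v * b = i + u * a by omega, h2]

lemma colPer_gcd {f : ℕ → ℕ → Fin k} {a b : ℕ} (hfa : ColPer f a) (hfb : ColPer f b)
    (ha : 0 < a) (hb : 0 < b) : ColPer f (Nat.gcd a b) := by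
  obtain ⟨u, v, huv⟩ := nat_bezout a b ha hb
  intro i j
  have h1 : f i (j + Nat.gcd a b + v * b) = f i (j + Nat.gcd a b) := colPer_mul hfb v i _
  have h2 : f i (j + u * a) = f i j := colPer_mul hfa u i j
  rw [← h1, show j + Nat.gcd a b + v * b = j + u * a by omega, h2]


/-- Characterization of primitivity via periods of the extension. -/
lemma arrPrim_iff {m n : ℕ} (hm : 0 < m) (hn : 0 < n) (A : Fin m × Fin n → Fin k) :
    ArrPrimitive A ↔ ∀ a b : ℕ, 0 < a → 0 < b → a ∣ m → b ∣ n →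
      RowPer (extA hm hn A) a → ColPer (extA hm hn A) b → a = m ∧ b = n := by
  constructor
  · intro hA a b ha hb ham hbn hra hcb
    set B : Fin a × Fin b → Fin k := fun x => extA hm hn A x.1 x.2 with hB
    have hp : 0 < m / a := Nat.div_pos (Nat.le_of_dvd hm ham) ha
    have hq : 0 < n / b := Nat.div_pos (Nat.le_of_dvd hn hbn) hb
    have hma : m / a * a = m := Nat.div_mul_cancel ham
    have hnb : n / b * b = n := Nat.div_mul_cancel hbn
    have key := hA a b (m / a) (n / b) B hp hq ⟨hma.symm, hnb.symm, ?_⟩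
    · rw [key.1, one_mul] at hma
      rw [key.2, one_mul] at hnb
      exact ⟨hma, hnb⟩
    · intro i j h1 h2 h1' h2'
      show A _ = B _
      rw [hB]
      show A _ = extA hm hn A _ _
      simp only
      rw [← rowPer_mod hra ha, ← colPer_mod hcb hb, extA_eq_self hm hn A h1 h2]
  · intro h m' n' p q B hp hq ⟨h1, h2, h3⟩
    have hm' : 0 < m' := by
      rcases Nat.eq_zero_or_pos m' with h0 | h0
      · rw [h0, Nat.mul_zero] at h1; omega
      · exact h0
    have hn' : 0 < n' := by
      rcases Nat.eq_zero_or_pos n' with h0 | h0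
      · rw [h0, Nat.mul_zero] at h2; omega
      · exact h0
    have hdm : m' ∣ m := ⟨p, by rw [h1]; ring⟩
    have hdn : n' ∣ n := ⟨q, by rw [h2]; ring⟩
    -- extA A i j = B (i % m', j % n')
    have hval : ∀ i j : ℕ, extA hm hn A i j
        = B (⟨i % m', Nat.mod_lt _ hm'⟩, ⟨j % n', Nat.mod_lt _ hn'⟩) := by
      intro i j
      have hi : i % m < m := Nat.mod_lt _ hm
      have hj : j % n < n := Nat.mod_lt _ hn
      have := h3 (i % m) (j % n) hi hj (h1 ▸ hi) (h2 ▸ hj)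
      unfold extA
      rw [this]
      show B _ = B _
      apply arr_congr
      · rw [Nat.mod_mod_of_dvd i hdm]
      · rw [Nat.mod_mod_of_dvd j hdn]
    have hrow : RowPer (extA hm hn A) m' := by
      intro i j
      rw [hval, hval]
      exact arr_congr B _ _ _ _ (Nat.add_mod_right i m') rfl
    have hcol : ColPer (extA hm hn A) n' := by
      intro i j
      rw [hval, hval]
      exact arr_congr B _ _ _ _ rfl (Nat.add_mod_right j n')
    obtain ⟨e1, e2⟩ := h m' n' hm' hn' hdm hdn hrow hcol
    constructor
    · have hpm : p * m = m := by rw [e1] at h1; omega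
      rcases Nat.lt_or_ge p 2 with hp2 | hp2
      · omega
      · exfalso; nlinarith
    · have hqn : q * n = n := by rw [e2] at h2; omega
      rcases Nat.lt_or_ge q 2 with hq2 | hq2
      · omega
      · exfalso; nlinarith

variable {m n : ℕ}

/-- Minimal row period (among divisors of `m`). -/
noncomputable def rp (hm : 0 < m) (hn : 0 < n) (A : Fin m × Fin n → Fin k) : ℕ :=
  sInf {a | 0 < a ∧ a ∣ m ∧ RowPer (extA hm hn A) a}

/-- Minimal column period (among divisors of `n`). -/
noncomputable def cp (hm : 0 < m) (hn : 0 < n) (A : Fin m × Fin n → Fin k) : ℕ :=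
  sInf {b | 0 < b ∧ b ∣ n ∧ ColPer (extA hm hn A) b}

lemma rp_mem (hm : 0 < m) (hn : 0 < n) (A : Fin m × Fin n → Fin k) :
    0 < rp hm hn A ∧ rp hm hn A ∣ m ∧ RowPer (extA hm hn A) (rp hm hn A) := by
  have h : ({a | 0 < a ∧ a ∣ m ∧ RowPer (extA hm hn A) a} : Set ℕ).Nonempty :=
    ⟨m, hm, dvd_rfl, rowPer_extA hm hn A⟩
  exact Nat.sInf_mem h

lemma cp_mem (hm : 0 < m) (hn : 0 < n) (A : Fin m × Fin n → Fin k) :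
    0 < cp hm hn A ∧ cp hm hn A ∣ n ∧ ColPer (extA hm hn A) (cp hm hn A) := by
  have h : ({b | 0 < b ∧ b ∣ n ∧ ColPer (extA hm hn A) b} : Set ℕ).Nonempty :=
    ⟨n, hn, dvd_rfl, colPer_extA hm hn A⟩
  exact Nat.sInf_mem h

lemma rp_dvd (hm : 0 < m) (hn : 0 < n) (A : Fin m × Fin n → Fin k) {a : ℕ}
    (ha : 0 < a) (ham : a ∣ m) (hra : RowPer (extA hm hn A) a) : rp hm hn A ∣ a := by
  obtain ⟨h1, h2, h3⟩ := rp_mem hm hn A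
  set g := Nat.gcd (rp hm hn A) a with hg
  have hgmem : g ∈ {a | 0 < a ∧ a ∣ m ∧ RowPer (extA hm hn A) a} :=
    ⟨Nat.gcd_pos_of_pos_left _ h1, (Nat.gcd_dvd_left _ _).trans h2,
      rowPer_gcd h3 hra h1 ha⟩
  have hle : rp hm hn A ≤ g := Nat.sInf_le hgmem
  have hge : g ≤ rp hm hn A := Nat.le_of_dvd h1 (Nat.gcd_dvd_left _ _)
  have : g = rp hm hn A := le_antisymm hge hle
  rw [← this]
  exact Nat.gcd_dvd_right _ _

lemma cp_dvd (hm : 0 < m) (hn : 0 < n) (A : Fin m × Fin n → Fin k) {b : ℕ}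
    (hb : 0 < b) (hbn : b ∣ n) (hcb : ColPer (extA hm hn A) b) : cp hm hn A ∣ b := by
  obtain ⟨h1, h2, h3⟩ := cp_mem hm hn A
  set g := Nat.gcd (cp hm hn A) b with hg
  have hgmem : g ∈ {b | 0 < b ∧ b ∣ n ∧ ColPer (extA hm hn A) b} :=
    ⟨Nat.gcd_pos_of_pos_left _ h1, (Nat.gcd_dvd_left _ _).trans h2,
      colPer_gcd h3 hcb h1 hb⟩
  have hle : cp hm hn A ≤ g := Nat.sInf_le hgmem
  have hge : g ≤ cp hm hn A := Nat.le_of_dvd h1 (Nat.gcd_dvd_left _ _)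
  have : g = cp hm hn A := le_antisymm hge hle
  rw [← this]
  exact Nat.gcd_dvd_right _ _

/-- Restriction of an array to an `a × b` upper-left corner (read via the extension). -/
def restr (hm : 0 < m) (hn : 0 < n) (A : Fin m × Fin n → Fin k) (a b : ℕ) :
    Fin a × Fin b → Fin k :=
  fun x => extA hm hn A x.1 x.2

/-- Expansion of an `a × b` array to an `m × n` array by periodic repetition. -/
def expa {a b : ℕ} (ha : 0 < a) (hb : 0 < b) (B : Fin a × Fin b → Fin k) :
    Fin m × Fin n → Fin k :=
  fun x => extA ha hb B x.1 x.2

lemma extA_expa {a b : ℕ} (ha : 0 < a) (hb : 0 < b) (hm : 0 < m) (hn : 0 < n)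
    (ham : a ∣ m) (hbn : b ∣ n) (B : Fin a × Fin b → Fin k) :
    extA hm hn (expa (m := m) (n := n) ha hb B) = extA ha hb B := by
  funext i j
  show extA ha hb B (i % m) (j % n) = extA ha hb B i j
  unfold extA
  apply arr_congr
  · rw [Nat.mod_mod_of_dvd i ham]
  · rw [Nat.mod_mod_of_dvd j hbn]

lemma extA_restr {a b : ℕ} (hm : 0 < m) (hn : 0 < n) (A : Fin m × Fin n → Fin k)
    (ha : 0 < a) (hb : 0 < b)
    (hra : RowPer (extA hm hn A) a) (hcb : ColPer (extA hm hn A) b) :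
    extA ha hb (restr hm hn A a b) = extA hm hn A := by
  funext i j
  show extA hm hn A (i % a) (j % b) = extA hm hn A i j
  rw [← rowPer_mod hra ha, ← colPer_mod hcb hb]

/-- The restriction to the minimal periods is primitive. -/
lemma restr_prim (hm : 0 < m) (hn : 0 < n) (A : Fin m × Fin n → Fin k)
    {a b : ℕ} (hA : a = rp hm hn A) (hB : b = cp hm hn A) :
    ArrPrimitive (restr hm hn A a b) := by
  subst hA; subst hB
  obtain ⟨ha, ham, hra⟩ := rp_mem hm hn A
  obtain ⟨hb, hbn, hcb⟩ := cp_mem hm hn A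
  rw [arrPrim_iff ha hb]
  intro a' b' ha' hb' ha'd hb'd hra' hcb'
  rw [extA_restr hm hn A ha hb hra hcb] at hra' hcb'
  constructor
  · exact Nat.dvd_antisymm ha'd (rp_dvd hm hn A ha' (ha'd.trans ham) hra')
  · exact Nat.dvd_antisymm hb'd (cp_dvd hm hn A hb' (hb'd.trans hbn) hcb')

lemma rpcp_expa (hm : 0 < m) (hn : 0 < n) {a b : ℕ} (ha : 0 < a) (hb : 0 < b)
    (ham : a ∣ m) (hbn : b ∣ n) (B : Fin a × Fin b → Fin k) (hB : ArrPrimitive B) :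
    rp hm hn (expa (m := m) (n := n) ha hb B) = a ∧
      cp hm hn (expa (m := m) (n := n) ha hb B) = b := by
  have hx := extA_expa ha hb hm hn ham hbn B
  set A := expa (m := m) (n := n) ha hb B with hA
  have hra : RowPer (extA hm hn A) a := by rw [hx]; exact rowPer_extA ha hb B
  have hcb : ColPer (extA hm hn A) b := by rw [hx]; exact colPer_extA ha hb B
  have h1 := rp_dvd hm hn A ha ham hra
  have h2 := cp_dvd hm hn A hb hbn hcb
  obtain ⟨hr1, hr2, hr3⟩ := rp_mem hm hn A
  obtain ⟨hc1, hc2, hc3⟩ := cp_mem hm hn A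
  rw [hx] at hr3 hc3
  exact (arrPrim_iff ha hb B).mp hB _ _ hr1 hc1 h1 h2 hr3 hc3

open Classical in
/-- The fiber of arrays with given minimal periods is equivalent to the primitive
arrays of that size. -/
noncomputable def fiberEquiv (hm : 0 < m) (hn : 0 < n) {a b : ℕ} (ha : 0 < a) (hb : 0 < b)
    (ham : a ∣ m) (hbn : b ∣ n) :
    {A : Fin m × Fin n → Fin k // (rp hm hn A, cp hm hn A) = (a, b)} ≃
      {B : Fin a × Fin b → Fin k // ArrPrimitive B} where
  toFun := fun ⟨A, hA⟩ => ⟨restr hm hn A a b,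
    restr_prim hm hn A (congrArg Prod.fst hA).symm (congrArg Prod.snd hA).symm⟩
  invFun := fun ⟨B, hB⟩ => ⟨expa ha hb B, by
    obtain ⟨e1, e2⟩ := rpcp_expa hm hn ha hb ham hbn B hB
    rw [e1, e2]⟩
  left_inv := by
    rintro ⟨A, hA⟩
    have e1 : rp hm hn A = a := congrArg Prod.fst hA
    have e2 : cp hm hn A = b := congrArg Prod.snd hA
    obtain ⟨hr1, hr2, hr3⟩ := rp_mem hm hn A
    obtain ⟨hc1, hc2, hc3⟩ := cp_mem hm hn A
    rw [e1] at hr3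
    rw [e2] at hc3
    apply Subtype.ext
    funext x
    show extA ha hb (restr hm hn A a b) x.1 x.2 = A x
    rw [extA_restr hm hn A ha hb hr3 hc3]
    rw [extA_eq_self hm hn A x.1.isLt x.2.isLt]
  right_inv := by
    rintro ⟨B, hB⟩
    apply Subtype.ext
    funext x
    show extA hm hn (expa ha hb B) x.1 x.2 = B x
    rw [extA_expa ha hb hm hn ham hbn B]
    rw [extA_eq_self ha hb B x.1.isLt x.2.isLt]

lemma card_sum (k : ℕ) {m n : ℕ} (hm : 0 < m) (hn : 0 < n) :
    k ^ (m * n) = ∑ a ∈ m.divisors, ∑ b ∈ n.divisors,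
      Nat.card {B : Fin a × Fin b → Fin k // ArrPrimitive B} := by
  classical
  have h1 : Fintype.card (Fin m × Fin n → Fin k) = k ^ (m * n) := by
    rw [Fintype.card_fun, Fintype.card_prod, Fintype.card_fin, Fintype.card_fin,
      Fintype.card_fin]
  rw [← h1, ← Finset.card_univ]
  rw [Finset.card_eq_sum_card_fiberwise
    (f := fun A : Fin m × Fin n → Fin k => (rp hm hn A, cp hm hn A))
    (t := m.divisors ×ˢ n.divisors) (fun A _ => by
      rw [Finset.mem_coe, Finset.mem_product, Nat.mem_divisors, Nat.mem_divisors]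
      exact ⟨⟨(rp_mem hm hn A).2.1, hm.ne'⟩, ⟨(cp_mem hm hn A).2.1, hn.ne'⟩⟩)]
  rw [Finset.sum_product]
  apply Finset.sum_congr rfl
  intro a hamem
  apply Finset.sum_congr rfl
  intro b hbmem
  obtain ⟨ham, -⟩ := Nat.mem_divisors.mp hamem
  obtain ⟨hbn, -⟩ := Nat.mem_divisors.mp hbmem
  have ha : 0 < a := Nat.pos_of_dvd_of_pos ham hm
  have hb : 0 < b := Nat.pos_of_dvd_of_pos hbn hn
  rw [← Nat.card_congr (fiberEquiv hm hn ha hb ham hbn)]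
  rw [Nat.card_eq_fintype_card, Fintype.card_subtype]

end Stmt13


open Stmt13

theorem stmt13 (k m n : ℕ) (hm : 0 < m) (hn : 0 < n) :
    (Nat.card {A : Fin m × Fin n → Fin k // ArrPrimitive A} : ℤ) =
      ∑ d1 ∈ m.divisors, ∑ d2 ∈ n.divisors,
        ArithmeticFunction.moebius d1 * ArithmeticFunction.moebius d2 *
          (k : ℤ) ^ (m * n / (d1 * d2)) := by
  classical
  set gz : ℕ → ℕ → ℤ := fun a b =>
    (Nat.card {B : Fin a × Fin b → Fin k // ArrPrimitive B} : ℤ) with hgz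
  have base : ∀ n' > 0, ∀ m' > 0,
      ∑ a ∈ Nat.divisors m', (∑ b ∈ Nat.divisors n', gz a b) = (k:ℤ) ^ (m' * n') := by
    intro n' hn' m' hm'
    have := card_sum k hm' hn'
    have := congrArg (fun x : ℕ => (x : ℤ)) this
    push_cast at this
    exact this.symm
  have step1 : ∀ n' > 0, ∀ m' > 0,
      ∑ x ∈ m'.divisorsAntidiagonal,
        (ArithmeticFunction.moebius x.1 : ℤ) • ((k:ℤ) ^ (x.2 * n'))
        = ∑ b ∈ Nat.divisors n', gz m' b := by
    intro n' hn'
    exact (ArithmeticFunction.sum_eq_iff_sum_smul_moebius_eq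
      (f := fun a => ∑ b ∈ Nat.divisors n', gz a b)
      (g := fun m' => (k:ℤ) ^ (m' * n'))).mp (base n' hn')
  have step2 : gz m n = ∑ y ∈ n.divisorsAntidiagonal,
      (ArithmeticFunction.moebius y.1 : ℤ) •
        (∑ x ∈ m.divisorsAntidiagonal,
          (ArithmeticFunction.moebius x.1 : ℤ) • ((k:ℤ) ^ (x.2 * y.2))) := by
    refine (((ArithmeticFunction.sum_eq_iff_sum_smul_moebius_eq
      (f := fun b => gz m b)
      (g := fun n' => ∑ x ∈ m.divisorsAntidiagonal,
        (ArithmeticFunction.moebius x.1 : ℤ) • ((k:ℤ) ^ (x.2 * n')))).mp ?_) n hn).symm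
    intro n' hn'
    exact (step1 n' hn' m hm).symm
  show gz m n = _
  calc gz m n = ∑ d2 ∈ n.divisors, (ArithmeticFunction.moebius d2 : ℤ) •
        ∑ d1 ∈ m.divisors, (ArithmeticFunction.moebius d1 : ℤ) •
          (k:ℤ) ^ (m / d1 * (n / d2)) := by
        rw [step2, Nat.sum_divisorsAntidiagonal (f := fun d e =>
          (ArithmeticFunction.moebius d : ℤ) •
            (∑ x ∈ m.divisorsAntidiagonal,
              (ArithmeticFunction.moebius x.1 : ℤ) • ((k:ℤ) ^ (x.2 * e))))]
        refine Finset.sum_congr rfl fun d2 h2 => ?_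
        rw [Nat.sum_divisorsAntidiagonal (f := fun d e =>
          (ArithmeticFunction.moebius d : ℤ) • ((k:ℤ) ^ (e * (n / d2))))]
    _ = _ := by
        simp only [smul_eq_mul, Finset.mul_sum]
        rw [Finset.sum_comm]
        refine Finset.sum_congr rfl fun d1 h1 => ?_
        refine Finset.sum_congr rfl fun d2 h2 => ?_
        have e : m / d1 * (n / d2) = m * n / (d1 * d2) :=
          Nat.div_mul_div_comm (Nat.mem_divisors.mp h1).1 (Nat.mem_divisors.mp h2).1
        rw [← e]
        ring
end

section
/- There exists an m×n array over a two-letter alphabet that is primitive (as a 2D array) but whose row-major reading (concatenating rows into one word of length mn) is not a primitive word; concretely the 2×3 array with rows 'aba' and 'bab' is 2D-primitive while its row-major word 'ababab' is not primitive. -/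
/-- The 2×3 array with rows `aba` and `bab` (with `a = 0`, `b = 1`). -/
def abaBab : Fin 2 × Fin 3 → Fin 2 :=
  fun x => ⟨(x.1.val + x.2.val) % 2, by omega⟩

theorem stmt19 :
    (ArrPrimitive abaBab ∧ ¬ WPrimitive (rowMajor abaBab)) ∧
    ∃ (m n : ℕ) (A : Fin m × Fin n → Fin 2), 0 < m ∧ 0 < n ∧
      ArrPrimitive A ∧ ¬ WPrimitive (rowMajor A) := by
  have hnot : ¬ WPrimitive (rowMajor abaBab) := by
    rintro ⟨-, h⟩
    exact h [0, 1] 3 (by norm_num) (by decide)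
  have hprim : ArrPrimitive abaBab := by
    rintro m' n' p q A hp hq ⟨h1, h2, h3⟩
    have hpm : p = 1 ∨ (p = 2 ∧ m' = 1) := by
      have := Nat.le_of_dvd two_pos ⟨m', h1⟩
      interval_cases p <;> omega
    have hqn : q = 1 ∨ (q = 3 ∧ n' = 1) := by
      have := Nat.le_of_dvd three_pos ⟨n', h2⟩
      interval_cases q <;> omega
    refine ⟨?_, ?_⟩
    · rcases hpm with h | ⟨hp2, hm1⟩
      · exact h
      · exfalso
        subst hp2 hm1
        have e0 := h3 0 0 (by omega) (by omega) (by omega) (by omega)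
        have e1 := h3 1 0 (by omega) (by omega) (by omega) (by omega)
        have key : abaBab (⟨0, by omega⟩, ⟨0, by omega⟩)
            = abaBab (⟨1, by omega⟩, ⟨0, by omega⟩) := by
          rw [e0, e1]
          simp [arrRep, Nat.mod_one]
        simp [abaBab] at key
    · rcases hqn with h | ⟨hq3, hn1⟩
      · exact h
      · exfalso
        subst hq3 hn1
        have e0 := h3 0 0 (by omega) (by omega) (by omega) (by omega)
        have e1 := h3 0 1 (by omega) (by omega) (by omega) (by omega)
        have key : abaBab (⟨0, by omega⟩, ⟨0, by omega⟩)
            = abaBab (⟨0, by omega⟩, ⟨1, by omega⟩) := by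
          rw [e0, e1]
          simp [arrRep, Nat.mod_one]
        simp [abaBab] at key
  exact ⟨⟨hprim, hnot⟩, 2, 3, abaBab, by norm_num, by norm_num, hprim, hnot⟩
end
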